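/- If ties are P-null at U, then the Legendre–Fenchel conjugate of g evaluated at the choice-probability vector p(U) satisfies g*(p(U)) := sup_{U' ∈ ℝ^A} ( Σ_{a∈A} p_a(U)·U'_a − g(U') ) = Σ_{a∈A} p_a(U)·U_a − g(U) = − ∫ ε_{a*(ε)} dP(ε); in particular the supremum defining the conjugate is attained at U' = U. -/

import Mathlib

open MeasureTheory

noncomputable section

variable {A : Type*} [Fintype A] [Nonempty A]

/-- The expected-maximum (social surplus) function
`g(U) = ∫ max_{a ∈ A} (U_a + ε_a) dP(ε)`. -/
def gfun (P : Measure (A → ℝ)) (U : A → ℝ) : ℝ :=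
  ∫ ε, (Finset.univ.sup' Finset.univ_nonempty fun a => U a + ε a) ∂P

/-- The choice probability `p_a(U) = P({ε : U_a + ε_a > U_b + ε_b for all b ≠ a})`. -/
def choiceProb (P : Measure (A → ℝ)) (U : A → ℝ) (a : A) : ℝ :=
  (P {ε | ∀ b, b ≠ a → U b + ε b < U a + ε a}).toReal

/-- `P` has full support: every nonempty open set has positive measure. -/
def FullSupport (P : Measure (A → ℝ)) : Prop :=
  ∀ s : Set (A → ℝ), IsOpen s → s.Nonempty → 0 < P s

/-- Ties are `P`-null at `U`: the event that the maximum of `a ↦ U_a + ε_a`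
is attained at more than one alternative has probability zero. -/
def TiesNull (P : Measure (A → ℝ)) (U : A → ℝ) : Prop :=
  P {ε | ∃ a b : A, a ≠ b ∧ (∀ c, U c + ε c ≤ U a + ε a) ∧ (∀ c, U c + ε c ≤ U b + ε b)} = 0

/-- A finite `sup'` of integrable functions is integrable. -/
lemma integrable_finset_sup'_aux {α : Type*} [MeasurableSpace α] {μ : Measure α} {B : Type*}
    (s : Finset B) (hs : s.Nonempty) (f : B → α → ℝ)
    (hf : ∀ a ∈ s, Integrable (f a) μ) :
    Integrable (fun x => s.sup' hs (fun a => f a x)) μ := by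
  induction hs using Finset.Nonempty.cons_induction with
  | singleton a => simpa using hf a (by simp)
  | cons a s ha hs ih =>
    simp only [Finset.sup'_cons hs]
    exact (hf a (by simp)).sup (ih (fun b hb => hf b (by simp [hb])))

/-- If ties are `P`-null at `U`, the Legendre–Fenchel conjugate of `g`
at the choice-probability vector `p(U)` equals `Σ_a p_a(U)·U_a − g(U)`, which equals
`−∫ ε_{a*(ε)} dP(ε)`; the supremum defining the conjugate is attained at `U' = U`. -/
theorem stmt8 (P : Measure (A → ℝ)) [IsProbabilityMeasure P]
    (hint : Integrable (fun ε : A → ℝ =>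
      Finset.univ.sup' Finset.univ_nonempty fun a => |ε a|) P)
    (U : A → ℝ) (hties : TiesNull P U)
    (astar : (A → ℝ) → A)
    (hastar : ∀ᵐ ε ∂P, ∀ b, U b + ε b ≤ U (astar ε) + ε (astar ε)) :
    (∀ U' : A → ℝ,
      ∑ a, choiceProb P U a * U' a - gfun P U' ≤ ∑ a, choiceProb P U a * U a - gfun P U) ∧
    (⨆ U' : A → ℝ, (∑ a, choiceProb P U a * U' a - gfun P U'))
      = ∑ a, choiceProb P U a * U a - gfun P U ∧
    ∑ a, choiceProb P U a * U a - gfun P U = -∫ ε, ε (astar ε) ∂P := by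
  classical
  set S : A → Set (A → ℝ) := fun a => {ε | ∀ b, b ≠ a → U b + ε b < U a + ε a} with hSdef
  -- measurability of the strict-maximizer sets
  have hSmeas : ∀ a, MeasurableSet (S a) := by
    intro a
    have h : S a = ⋂ b, {ε : A → ℝ | b ≠ a → U b + ε b < U a + ε a} := by
      ext ε; simp [hSdef, Set.mem_iInter]
    rw [h]
    refine MeasurableSet.iInter fun b => ?_
    by_cases hb : b = a
    · subst hb; simp
    · have h2 : {ε : A → ℝ | b ≠ a → U b + ε b < U a + ε a}
          = {ε : A → ℝ | U b + ε b < U a + ε a} := by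
        ext ε; simp [hb]
      rw [h2]
      exact measurableSet_lt (measurable_const.add (measurable_pi_apply b))
        (measurable_const.add (measurable_pi_apply a))
  have hcp : ∀ a, choiceProb P U a = (P (S a)).toReal := fun a => rfl
  -- a.e. the maximizer is strict
  have hties' : ∀ᵐ ε ∂P, ε ∉ {ε | ∃ a b : A, a ≠ b ∧ (∀ c, U c + ε c ≤ U a + ε a)
      ∧ (∀ c, U c + ε c ≤ U b + ε b)} := measure_eq_zero_iff_ae_notMem.1 hties
  have hG : ∀ᵐ ε ∂P, ε ∈ S (astar ε) := by
    filter_upwards [hastar, hties'] with ε h1 h2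
    intro b hb
    rcases lt_or_eq_of_le (h1 b) with h | h
    · exact h
    · exact absurd ⟨astar ε, b, Ne.symm hb, h1, fun c => (h1 c).trans h.symm.le⟩ h2
  -- a.e. representation of ε ↦ f (astar ε) ε as a sum of indicators
  have hrep : ∀ f : A → (A → ℝ) → ℝ,
      ∀ᵐ ε ∂P, f (astar ε) ε = ∑ a, (S a).indicator (f a) ε := by
    intro f
    filter_upwards [hG] with ε hε
    rw [Finset.sum_eq_single (astar ε)]
    · rw [Set.indicator_of_mem hε]
    · intro a _ ha
      refine Set.indicator_of_notMem (fun hmem => ?_) _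
      exact lt_asymm (hε a ha) (hmem (astar ε) (Ne.symm ha))
    · intro h; exact absurd (Finset.mem_univ _) h
  -- integrability facts
  have hInt_eps : ∀ a, Integrable (fun ε : A → ℝ => ε a) P := by
    intro a
    refine hint.mono (measurable_pi_apply a).aestronglyMeasurable (ae_of_all _ fun ε => ?_)
    rw [Real.norm_eq_abs, Real.norm_eq_abs]
    exact le_trans (Finset.le_sup' (fun b => |ε b|) (Finset.mem_univ a)) (le_abs_self _)
  have hIntM : ∀ V : A → ℝ,
      Integrable (fun ε => Finset.univ.sup' Finset.univ_nonempty fun a => V a + ε a) P :=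
    fun V => integrable_finset_sup'_aux _ _ _
      (fun a _ => (integrable_const (V a)).add (hInt_eps a))
  have hIntInd : ∀ f : A → (A → ℝ) → ℝ, (∀ a, Integrable (f a) P) →
      Integrable (fun ε => ∑ a, (S a).indicator (f a) ε) P :=
    fun f hf => integrable_finset_sum _ fun a _ => (hf a).indicator (hSmeas a)
  -- the key integral identity for the linear part
  have hsum : ∀ V : A → ℝ, ∑ a, choiceProb P U a * V a
      = ∫ ε, ∑ a, (S a).indicator (fun _ => V a) ε ∂P := by
    intro V
    rw [integral_finset_sum _ (fun a _ => (integrable_const (V a)).indicator (hSmeas a))]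
    refine Finset.sum_congr rfl fun a _ => ?_
    rw [integral_indicator (hSmeas a), setIntegral_const, smul_eq_mul, hcp]; rfl
  set E : ℝ := ∫ ε, ∑ a, (S a).indicator (fun x => x a) ε ∂P with hE
  have hIntE : Integrable (fun ε => ∑ a, (S a).indicator (fun x : A → ℝ => x a) ε) P :=
    hIntInd _ fun a => hInt_eps a
  have hstar_eq : ∫ ε, ε (astar ε) ∂P = E := integral_congr_ae (hrep fun a x => x a)
  -- general upper bound
  have key1 : ∀ V : A → ℝ, ∑ a, choiceProb P U a * V a - gfun P V ≤ -E := by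
    intro V
    have hdiff : ∑ a, choiceProb P U a * V a - gfun P V
        = ∫ ε, ((∑ a, (S a).indicator (fun _ => V a) ε)
            - Finset.univ.sup' Finset.univ_nonempty fun a => V a + ε a) ∂P := by
      rw [hsum V, gfun, ← integral_sub (hIntInd _ fun a => integrable_const (V a)) (hIntM V)]
    rw [hdiff]
    have hmono : (fun ε => (∑ a, (S a).indicator (fun _ => V a) ε)
        - Finset.univ.sup' Finset.univ_nonempty fun a => V a + ε a)
        ≤ᵐ[P] fun ε => -(∑ a, (S a).indicator (fun x : A → ℝ => x a) ε) := by
      filter_upwards [hrep fun a _ => V a, hrep fun a x => x a] with ε e1 e2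
      rw [← e1, ← e2]
      have hle : V (astar ε) + ε (astar ε)
          ≤ Finset.univ.sup' Finset.univ_nonempty fun a => V a + ε a :=
        Finset.le_sup' (fun a => V a + ε a) (Finset.mem_univ _)
      linarith
    calc ∫ ε, ((∑ a, (S a).indicator (fun _ => V a) ε)
            - Finset.univ.sup' Finset.univ_nonempty fun a => V a + ε a) ∂P
        ≤ ∫ ε, -(∑ a, (S a).indicator (fun x : A → ℝ => x a) ε) ∂P :=
          integral_mono_ae ((hIntInd _ fun a => integrable_const (V a)).sub (hIntM V))
            hIntE.neg hmono
      _ = -E := by rw [integral_neg]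
  -- equality at U
  have key2 : ∑ a, choiceProb P U a * U a - gfun P U = -E := by
    have hdiff : ∑ a, choiceProb P U a * U a - gfun P U
        = ∫ ε, ((∑ a, (S a).indicator (fun _ => U a) ε)
            - Finset.univ.sup' Finset.univ_nonempty fun a => U a + ε a) ∂P := by
      rw [hsum U, gfun, ← integral_sub (hIntInd _ fun a => integrable_const (U a)) (hIntM U)]
    have heq : (fun ε => (∑ a, (S a).indicator (fun _ => U a) ε)
        - Finset.univ.sup' Finset.univ_nonempty fun a => U a + ε a)
        =ᵐ[P] fun ε => -(∑ a, (S a).indicator (fun x : A → ℝ => x a) ε) := by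
      filter_upwards [hrep fun a _ => U a, hrep fun a x => x a, hastar] with ε e1 e2 hmax
      rw [← e1, ← e2]
      have hM : (Finset.univ.sup' Finset.univ_nonempty fun a => U a + ε a)
          = U (astar ε) + ε (astar ε) :=
        le_antisymm (Finset.sup'_le _ _ fun b _ => hmax b)
          (Finset.le_sup' (fun a => U a + ε a) (Finset.mem_univ _))
      rw [hM]; ring
    rw [hdiff, integral_congr_ae heq, integral_neg]
  have key1' : ∀ V : A → ℝ, ∑ a, choiceProb P U a * V a - gfun P V
      ≤ ∑ a, choiceProb P U a * U a - gfun P U := fun V => key2 ▸ key1 V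
  refine ⟨key1', ?_, ?_⟩
  · refine le_antisymm (ciSup_le key1') ?_
    exact le_ciSup ⟨∑ a, choiceProb P U a * U a - gfun P U, by
      rintro x ⟨V, rfl⟩; exact key1' V⟩ U
  · rw [key2, hstar_eq]
end
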